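/- arXiv:1804.04529 — 4 statements merged into one kernel-verified Lean document; each statement's English description precedes it below -/
import Mathlib

section
/- Let X ⊆ ℝ^d be compact and convex with Euclidean diameter diam(X), and let ℓ_1, …, ℓ_T : X → ℝ be convex and differentiable with ‖∇ℓ_t(x)‖ ≤ L for all x ∈ X and all t. Then the online gradient descent iterates with step-size γ = diam(X)/(L√T) satisfy the regret bound R_T = Σ_{t=1}^T ℓ_t(x_t) − min_{x∈X} Σ_{t=1}^T ℓ_t(x) ≤ diam(X) · L · √T. -/
open Filter Set Finset Topology

set_option maxHeartbeats 1000000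

local notation "⟪" x ", " y "⟫" => @inner ℝ _ _ x y

private lemma grad_convex_ineq {d : ℕ} {X : Set (EuclideanSpace ℝ (Fin d))}
    (hXcv : Convex ℝ X) {f : EuclideanSpace ℝ (Fin d) → ℝ}
    {gr x z : EuclideanSpace ℝ (Fin d)} (hf : ConvexOn ℝ X f)
    (hx : x ∈ X) (hz : z ∈ X) (hg : HasGradientWithinAt f gr X x) :
    f x + ⟪gr, z - x⟫ ≤ f z := by
  have hfd : HasFDerivWithinAt f (InnerProductSpace.toDual ℝ _ gr) X x :=
    hg.hasFDerivWithinAt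
  have hl := hfd.hasLineDerivWithinAt (z - x)
  rw [HasLineDerivWithinAt, hasDerivWithinAt_iff_tendsto_slope] at hl
  have hval : (InnerProductSpace.toDual ℝ _ gr) (z - x) = ⟪gr, z - x⟫ := by
    simp
  rw [hval] at hl
  have hsub : Ioc (0:ℝ) 1 ⊆ ((fun t : ℝ => x + t • (z - x)) ⁻¹' X) \ {0} := by
    intro t ht
    refine ⟨?_, ne_of_gt ht.1⟩
    have he : x + t • (z - x) = (1 - t) • x + t • z := by module
    simp only [Set.mem_preimage, he]
    exact hXcv hx hz (by linarith [ht.2]) ht.1.le (by ring)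
  have hne : (𝓝[Ioc (0:ℝ) 1] 0).NeBot := by
    apply mem_closure_iff_nhdsWithin_neBot.mp
    rw [closure_Ioc (one_ne_zero : (1:ℝ) ≠ 0).symm]
    exact ⟨le_rfl, zero_le_one⟩
  have hl2 : Tendsto (slope (fun t : ℝ => f (x + t • (z - x))) 0) (𝓝[Ioc (0:ℝ) 1] 0)
      (𝓝 ⟪gr, z - x⟫) := hl.mono_left (nhdsWithin_mono _ hsub)
  have key : ⟪gr, z - x⟫ ≤ f z - f x := by
    refine le_of_tendsto hl2 ?_
    filter_upwards [self_mem_nhdsWithin] with t ht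
    have he : x + t • (z - x) = (1 - t) • x + t • z := by module
    have h2 := hf.2 hx hz (by linarith [ht.2] : (0:ℝ) ≤ 1 - t) ht.1.le (by ring)
    rw [slope_def_field, he]
    rw [div_le_iff₀ (by linarith [ht.1] : (0:ℝ) < t - 0)]
    have h0 : f (x + (0:ℝ) • (z - x)) = f x := by simp
    rw [h0]
    simp only [smul_eq_mul] at h2
    nlinarith [h2]
  linarith

private lemma proj_contract {d : ℕ} {X : Set (EuclideanSpace ℝ (Fin d))}
    (hXcv : Convex ℝ X) {proj : EuclideanSpace ℝ (Fin d) → EuclideanSpace ℝ (Fin d)}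
    (hproj : ∀ y, proj y ∈ X ∧ ∀ z ∈ X, ‖y - proj y‖ ≤ ‖y - z‖)
    (y : EuclideanSpace ℝ (Fin d)) {z : EuclideanSpace ℝ (Fin d)} (hz : z ∈ X) :
    ‖proj y - z‖ ≤ ‖y - z‖ := by
  haveI : Nonempty X := ⟨⟨proj y, (hproj y).1⟩⟩
  have hmin : ‖y - proj y‖ = ⨅ w : X, ‖y - (w : EuclideanSpace ℝ (Fin d))‖ := by
    refine le_antisymm (le_ciInf fun w => (hproj y).2 w w.2) ?_
    have hbdd : BddBelow (Set.range fun w : X => ‖y - (w : EuclideanSpace ℝ (Fin d))‖) := by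
      refine ⟨0, ?_⟩
      rintro _ ⟨w, rfl⟩
      exact norm_nonneg _
    exact ciInf_le hbdd ⟨proj y, (hproj y).1⟩
  have hvar := (norm_eq_iInf_iff_real_inner_le_zero hXcv (hproj y).1).mp hmin z hz
  have hexp : ‖y - z‖^2
      = ‖y - proj y‖^2 + 2*⟪y - proj y, proj y - z⟫ + ‖proj y - z‖^2 := by
    have he : y - z = (y - proj y) + (proj y - z) := by abel
    rw [he, norm_add_sq_real]
  have hinner : ⟪y - proj y, proj y - z⟫ = -⟪y - proj y, z - proj y⟫ := by
    rw [← inner_neg_right]; congr 1; abel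
  nlinarith [norm_nonneg (proj y - z), norm_nonneg (y - z), sq_nonneg (‖y - proj y‖)]

/-- **Worst-case regret of online gradient descent (Zinkevich).**
Let `X ⊆ ℝ^d` be compact convex with Euclidean diameter `diam X`, and let
`ℓ₁, …, ℓ_T : X → ℝ` be convex and differentiable with `‖∇ℓ_t(x)‖ ≤ L` on `X`.  Then the
online gradient descent iterates `x_{t+1} = Π(x_t − γ ∇ℓ_t(x_t))` with step-size
`γ = diam(X)/(L√T)` satisfy `∑_t ℓ_t(x_t) − min_{x∈X} ∑_t ℓ_t(x) ≤ diam(X)·L·√T`. -/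
theorem ogd_worst_case_regret
    {d : ℕ} (X : Set (EuclideanSpace ℝ (Fin d)))
    (hXcomp : IsCompact X) (hXcv : Convex ℝ X) (hXne : X.Nonempty)
    (proj : EuclideanSpace ℝ (Fin d) → EuclideanSpace ℝ (Fin d))
    (hproj : ∀ y, proj y ∈ X ∧ ∀ z ∈ X, ‖y - proj y‖ ≤ ‖y - z‖)
    (T : ℕ) (ℓ : ℕ → EuclideanSpace ℝ (Fin d) → ℝ)
    (g : ℕ → EuclideanSpace ℝ (Fin d) → EuclideanSpace ℝ (Fin d))
    (hconv : ∀ t, ConvexOn ℝ X (ℓ t))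
    (hgrad : ∀ t, ∀ z ∈ X, HasGradientWithinAt (ℓ t) (g t z) X z)
    (L : ℝ) (hL : 0 < L) (hgb : ∀ t, ∀ z ∈ X, ‖g t z‖ ≤ L)
    (γ : ℝ) (hγ : γ = Metric.diam X / (L * Real.sqrt T))
    (x : ℕ → EuclideanSpace ℝ (Fin d)) (hx1 : x 0 ∈ X)
    (hrec : ∀ t, x (t + 1) = proj (x t - γ • g t (x t))) :
    ∑ t ∈ Finset.range T, ℓ t (x t) -
        sInf ((fun z => ∑ t ∈ Finset.range T, ℓ t z) '' X) ≤
      Metric.diam X * L * Real.sqrt T := by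
  have hxX : ∀ t, x t ∈ X := by
    intro t
    induction t with
    | zero => exact hx1
    | succ n ih => rw [hrec]; exact (hproj _).1
  set D := Metric.diam X with hD
  have hD0 : 0 ≤ D := Metric.diam_nonneg
  have hsT : 0 ≤ Real.sqrt T := Real.sqrt_nonneg _
  have hne : ((fun z => ∑ t ∈ Finset.range T, ℓ t z) '' X).Nonempty := hXne.image _
  have key : ∀ z ∈ X, ∑ t ∈ Finset.range T, ℓ t (x t) - ∑ t ∈ Finset.range T, ℓ t z
      ≤ D * L * Real.sqrt T := by
    intro z hz
    rcases Nat.eq_zero_or_pos T with hT | hT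
    · subst hT; simp
    rcases eq_or_lt_of_le hD0 with hDz | hDpos
    · have hxz : ∀ t, x t = z := by
        intro t
        have hd := Metric.dist_le_diam_of_mem hXcomp.isBounded (hxX t) hz
        rw [← hD, ← hDz] at hd
        exact dist_le_zero.mp hd
      have hsumeq : ∑ t ∈ Finset.range T, ℓ t (x t) = ∑ t ∈ Finset.range T, ℓ t z :=
        Finset.sum_congr rfl fun t _ => by rw [hxz t]
      rw [hsumeq]
      have : (0:ℝ) ≤ D * L * Real.sqrt T := by positivity
      linarith
    have hs : 0 < Real.sqrt T := Real.sqrt_pos.mpr (by exact_mod_cast hT)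
    have hγpos : 0 < γ := by rw [hγ]; exact div_pos hDpos (by positivity)
    set a : ℕ → ℝ := fun t => ‖x t - z‖^2 with ha
    have step : ∀ t, ℓ t (x t) - ℓ t z ≤ (a t - a (t+1))/(2*γ) + γ * L^2/2 := by
      intro t
      have h1 := grad_convex_ineq hXcv (hconv t) (hxX t) hz (hgrad t _ (hxX t))
      have hflip : ⟪g t (x t), z - x t⟫ = -⟪g t (x t), x t - z⟫ := by
        rw [← inner_neg_right]; congr 1; abel
      have hI : ℓ t (x t) - ℓ t z ≤ ⟪g t (x t), x t - z⟫ := by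
        rw [hflip] at h1; linarith
      have h2 : a (t+1) ≤ ‖(x t - γ • g t (x t)) - z‖^2 := by
        simp only [ha, hrec t]
        exact pow_le_pow_left₀ (norm_nonneg _)
          (proj_contract hXcv hproj (x t - γ • g t (x t)) hz) 2
      have h3 : ‖(x t - γ • g t (x t)) - z‖^2
          = a t - 2*γ*⟪g t (x t), x t - z⟫ + γ^2 * ‖g t (x t)‖^2 := by
        have he : (x t - γ • g t (x t)) - z = (x t - z) - γ • g t (x t) := by abel
        rw [he, norm_sub_sq_real, real_inner_smul_right, norm_smul,
          real_inner_comm, mul_pow, Real.norm_eq_abs, sq_abs]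
        ring
      have hgL : ‖g t (x t)‖^2 ≤ L^2 := by
        have hb := hgb t _ (hxX t)
        nlinarith [norm_nonneg (g t (x t))]
      have h5 : ⟪g t (x t), x t - z⟫ - γ*L^2/2 ≤ (a t - a (t+1))/(2*γ) := by
        rw [le_div_iff₀ (by positivity : (0:ℝ) < 2*γ)]
        nlinarith [mul_le_mul_of_nonneg_left hgL (sq_nonneg γ)]
      linarith
    have hsum : ∑ t ∈ Finset.range T, (ℓ t (x t) - ℓ t z)
        ≤ (a 0 - a T)/(2*γ) + T * (γ * L^2/2) := by
      calc ∑ t ∈ Finset.range T, (ℓ t (x t) - ℓ t z)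
          ≤ ∑ t ∈ Finset.range T, ((a t - a (t+1))/(2*γ) + γ * L^2/2) :=
            Finset.sum_le_sum fun t _ => step t
        _ = (∑ t ∈ Finset.range T, (a t - a (t+1)))/(2*γ) + T * (γ*L^2/2) := by
            rw [Finset.sum_add_distrib, ← Finset.sum_div, Finset.sum_const,
              Finset.card_range, nsmul_eq_mul]
        _ = (a 0 - a T)/(2*γ) + T*(γ*L^2/2) := by rw [Finset.sum_range_sub']
    have ha0 : a 0 ≤ D^2 := by
      have hd := Metric.dist_le_diam_of_mem hXcomp.isBounded (hxX 0) hz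
      rw [dist_eq_norm, ← hD] at hd
      have he : a 0 = ‖x 0 - z‖^2 := rfl
      rw [he]
      nlinarith [norm_nonneg (x 0 - z)]
    have haT : 0 ≤ a T := sq_nonneg _
    have hsq : (Real.sqrt T)^2 = (T:ℝ) := Real.sq_sqrt (Nat.cast_nonneg T)
    have e1 : (a 0 - a T)/(2*γ) ≤ D*L*Real.sqrt T/2 := by
      calc (a 0 - a T)/(2*γ) ≤ D^2/(2*γ) := by gcongr; linarith
        _ = D*L*Real.sqrt T/2 := by
            rw [hγ]; field_simp
    have e2 : (T:ℝ)*(γ*L^2/2) = D*L*Real.sqrt T/2 := by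
      rw [hγ]; field_simp; linear_combination (-1) * hsq
    rw [← Finset.sum_sub_distrib]
    linarith
  have hInf : ∑ t ∈ Finset.range T, ℓ t (x t) - D * L * Real.sqrt T
      ≤ sInf ((fun z => ∑ t ∈ Finset.range T, ℓ t z) '' X) := by
    apply le_csInf hne
    rintro b ⟨z, hzX, rfl⟩
    linarith [key z hzX]
  linarith
end

section
/- Let X ⊆ ℝ^d be a compact convex set of Euclidean diameter D containing two points at distance D, and let L > 0. For every deterministic online algorithm — i.e., every family of maps assigning to each history (v_1, …, v_{t−1}) a point x_t ∈ X — and every horizon T, there exists a sequence of vectors v_1, …, v_T ∈ ℝ^d with ‖v_t‖ ≤ L such that the linear losses ℓ_t(x) = −⟨v_t, x⟩ force regret R_T = Σ_{t=1}^T ℓ_t(x_t) − min_{x∈X} Σ_{t=1}^T ℓ_t(x) ≥ (D L / (2√2)) √T. -/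
open Finset

lemma cb_real (m : ℕ) (hm : 1 ≤ m) :
    (16:ℝ)^m ≤ 4 * m * (Nat.centralBinom m)^2 := by
  induction m, hm using Nat.le_induction with
  | base => norm_num [Nat.centralBinom]
  | succ m hm ih =>
    have h1 : ((m:ℝ)+1) * (Nat.centralBinom (m+1)) = 2*(2*m+1) * Nat.centralBinom m := by
      have := congrArg (fun x : ℕ => (x:ℝ)) (Nat.succ_mul_centralBinom_succ m)
      push_cast at this
      linarith
    have hpos : (0:ℝ) < (m:ℝ) + 1 := by positivity
    have h2 : ((m:ℝ)+1)^2 * (Nat.centralBinom (m+1))^2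
        = 4*(2*m+1)^2 * (Nat.centralBinom m)^2 := by
      linear_combination (((m:ℝ)+1) * (Nat.centralBinom (m+1)) + 2*(2*m+1) * Nat.centralBinom m) * h1
    have key : ((m:ℝ)+1) * (16:ℝ)^(m+1) ≤ ((m:ℝ)+1) * (4 * ((m:ℝ)+1) * (Nat.centralBinom (m+1))^2) := by
      have hr : ((m:ℝ)+1) * (4 * ((m:ℝ)+1) * (Nat.centralBinom (m+1))^2)
          = 16*(2*m+1)^2 * (Nat.centralBinom m)^2 := by linear_combination 4 * h2
      rw [hr]
      have h16 : ((m:ℝ)+1) * (16:ℝ)^(m+1) = 16*((m:ℝ)+1) * 16^m := by ring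
      rw [h16]
      have hm1 : (1:ℝ) ≤ (m:ℝ) := by exact_mod_cast hm
      nlinarith [ih, sq_nonneg ((Nat.centralBinom m : ℝ))]
    have := le_of_mul_le_mul_left key hpos
    exact_mod_cast this

lemma cb_sqrt (m : ℕ) (hm : 1 ≤ m) :
    (4:ℝ)^m ≤ 2 * Real.sqrt m * Nat.centralBinom m := by
  have h := cb_real m hm
  have hs : Real.sqrt m ^ 2 = (m:ℝ) := Real.sq_sqrt (by positivity)
  have h2 : ((4:ℝ)^m)^2 ≤ (2 * Real.sqrt m * Nat.centralBinom m)^2 := by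
    have : ((4:ℝ)^m)^2 = 16^m := by rw [← pow_mul, pow_mul']; norm_num
    rw [this]
    calc (16:ℝ)^m ≤ 4 * m * (Nat.centralBinom m)^2 := h
      _ = (2 * Real.sqrt m * Nat.centralBinom m)^2 := by rw [mul_pow, mul_pow, hs]; ring
  have h4 : (0:ℝ) ≤ (4:ℝ)^m := by positivity
  have hb : (0:ℝ) ≤ 2 * Real.sqrt m * Nat.centralBinom m := by positivity
  exact (pow_le_pow_iff_left₀ h4 hb two_ne_zero).mp h2

lemma sqrt_step (m : ℕ) :
    Real.sqrt (m+1) ≤ Real.sqrt m + (Nat.centralBinom m : ℝ)/4^m := by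
  rcases Nat.eq_zero_or_pos m with rfl | hm
  · simp [Nat.centralBinom]
  · have hs : (0:ℝ) < Real.sqrt m := Real.sqrt_pos.mpr (by exact_mod_cast hm)
    have h4 : (0:ℝ) < (4:ℝ)^m := by positivity
    have hc : 1/(2*Real.sqrt m) ≤ (Nat.centralBinom m : ℝ)/4^m := by
      rw [div_le_div_iff₀ (by positivity) h4]
      calc (1:ℝ) * 4^m = 4^m := by ring
        _ ≤ 2 * Real.sqrt m * Nat.centralBinom m := cb_sqrt m hm
        _ = (Nat.centralBinom m : ℝ) * (2*Real.sqrt m) := by ring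
    set c : ℝ := (Nat.centralBinom m : ℝ)/4^m with hcdef
    have hc0 : 0 ≤ c := by positivity
    have hsq : ((m:ℝ)+1) ≤ (Real.sqrt m + c)^2 := by
      have h2 : Real.sqrt m ^ 2 = (m:ℝ) := Real.sq_sqrt (by positivity)
      have h3 : 1 ≤ 2 * Real.sqrt m * c := by
        have := mul_le_mul_of_nonneg_left hc (by positivity : (0:ℝ) ≤ 2 * Real.sqrt m)
        calc (1:ℝ) = 2 * Real.sqrt m * (1/(2*Real.sqrt m)) := by field_simp
          _ ≤ 2 * Real.sqrt m * c := this
      nlinarith [sq_nonneg c]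
    calc Real.sqrt (m+1) ≤ Real.sqrt ((Real.sqrt m + c)^2) := Real.sqrt_le_sqrt hsq
      _ = Real.sqrt m + c := Real.sqrt_sq (by positivity)
open Finset

noncomputable def Br (n : ℕ) : ℝ :=
  ∑ k ∈ Finset.range (n+1), (n.choose k : ℝ) * |2*(k:ℝ) - n|

lemma abs_pm (a : ℤ) : (|a - 1| + |a + 1| : ℤ) = 2*|a| + (if a = 0 then 2 else 0) := by
  rcases lt_trichotomy a 0 with h | rfl | h
  · rw [if_neg h.ne, abs_of_neg h, abs_of_neg (by omega : a - 1 < 0),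
      abs_of_nonpos (by omega : a + 1 ≤ 0)]; ring
  · norm_num
  · rw [if_neg h.ne', abs_of_pos h, abs_of_nonneg (by omega : 0 ≤ a - 1),
      abs_of_pos (by omega : 0 < a + 1)]; ring

lemma f_add (n k : ℕ) :
    |2*((k:ℝ)) - (n+1)| + |2*((k:ℝ)+1) - (n+1)|
      = 2 * |2*(k:ℝ) - n| + (if 2*k = n then 2 else 0) := by
  have h := abs_pm (2*(k:ℤ) - n)
  have hcast := congrArg (fun x : ℤ => (x:ℝ)) h
  push_cast at hcast
  have hiff : (2*(k:ℤ) - (n:ℤ) = 0) ↔ (2*k = n) := by omega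
  by_cases hk : 2*k = n
  · rw [if_pos hk] at *
    rw [if_pos (hiff.mpr hk)] at hcast
    push_cast at hcast ⊢
    convert hcast using 2 <;> ring_nf
  · rw [if_neg hk]
    rw [if_neg (fun h' => hk (hiff.mp h'))] at hcast
    push_cast at hcast ⊢
    convert hcast using 2 <;> ring_nf


lemma pascal_sum (n : ℕ) (g : ℕ → ℝ) :
    ∑ k ∈ range (n+2), ((n+1).choose k : ℝ) * g k
      = ∑ k ∈ range (n+1), (n.choose k : ℝ) * (g k + g (k+1)) := by
  rw [Finset.sum_range_succ' (fun k => (((n+1).choose k : ℝ)) * g k) (n+1)]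
  have h1 : ∑ k ∈ range (n+1), (((n+1).choose (k+1) : ℝ)) * g (k+1)
      = ∑ k ∈ range (n+1), ((n.choose k : ℝ) * g (k+1) + (n.choose (k+1) : ℝ) * g (k+1)) := by
    refine Finset.sum_congr rfl fun k _ => ?_
    rw [Nat.choose_succ_succ]; push_cast; ring
  rw [h1, Finset.sum_add_distrib, add_assoc]
  have h2 : ∑ k ∈ range (n+1), (n.choose (k+1) : ℝ) * g (k+1) + ((n+1).choose 0 : ℝ) * g 0
      = ∑ k ∈ range (n+1), (n.choose k : ℝ) * g k := by
    have h3 := Finset.sum_range_succ' (fun k => (n.choose k : ℝ) * g k) (n+1)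
    rw [Finset.sum_range_succ (fun k => (n.choose k : ℝ) * g k) (n+1)] at h3
    simp only [Nat.choose_succ_self, Nat.cast_zero, zero_mul, add_zero,
      Nat.choose_zero_right, Nat.cast_one, one_mul] at h3 ⊢
    exact h3.symm
  rw [h2, ← Finset.sum_add_distrib]
  exact Finset.sum_congr rfl fun k _ => by ring

lemma Br_succ (n : ℕ) :
    Br (n+1) = 2 * Br n + (if Even n then 2*((n.choose (n/2)):ℝ) else 0) := by
  have hdef : Br (n+1) = ∑ k ∈ range (n+2), ((n+1).choose k : ℝ) * |2*(k:ℝ) - ((n:ℝ)+1)| := by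
    unfold Br; push_cast; rfl
  rw [hdef, pascal_sum n (fun k => |2*(k:ℝ) - ((n:ℝ)+1)|)]
  have hpt : ∀ k : ℕ, (|2*(k:ℝ) - ((n:ℝ)+1)| + |2*(((k+1:ℕ)):ℝ) - ((n:ℝ)+1)|)
      = 2 * |2*(k:ℝ) - (n:ℝ)| + (if 2*k = n then (2:ℝ) else 0) := by
    intro k; push_cast; exact f_add n k
  have hstep : ∑ k ∈ range (n+1), (n.choose k : ℝ) *
        (|2*(k:ℝ) - ((n:ℝ)+1)| + |2*(((k+1:ℕ)):ℝ) - ((n:ℝ)+1)|)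
      = 2 * (∑ k ∈ range (n+1), (n.choose k : ℝ) * |2*(k:ℝ) - (n:ℝ)|)
        + ∑ k ∈ range (n+1), (n.choose k : ℝ) * (if 2*k = n then (2:ℝ) else 0) := by
    rw [Finset.mul_sum, ← Finset.sum_add_distrib]
    refine Finset.sum_congr rfl fun k _ => ?_
    rw [hpt k]; ring
  rw [hstep]
  congr 1
  by_cases hn : Even n
  · obtain ⟨j, hj⟩ := hn
    have hsimp : ∀ k ∈ range (n+1), (n.choose k : ℝ) * (if 2*k = n then (2:ℝ) else 0)
        = if k = j then (n.choose k : ℝ) * 2 else 0 := by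
      intro k _
      by_cases hk : k = j
      · rw [if_pos hk, if_pos (by omega)]
      · rw [if_neg hk, if_neg (by omega), mul_zero]
    rw [Finset.sum_congr rfl hsimp, Finset.sum_ite_eq' (range (n+1)) j
      (fun k => (n.choose k : ℝ) * 2)]
    rw [if_pos (by simp only [Finset.mem_range]; omega), if_pos ⟨j, hj⟩]
    have : n / 2 = j := by omega
    rw [this]; ring
  · rw [if_neg hn]
    refine Finset.sum_eq_zero fun k _ => ?_
    rw [if_neg (by intro h; exact hn ⟨k, by omega⟩), mul_zero]

lemma Br_even : ∀ m : ℕ, Real.sqrt m * 4^m ≤ Br (2*m) := by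
  intro m
  induction m with
  | zero => simp [Br]
  | succ m ih =>
    have hodd : ¬ Even (2*m+1) := by simp [Nat.even_iff, Nat.add_mod, Nat.mul_mod]
    have heven : Even (2*m) := ⟨m, by ring⟩
    have hhalf : (2*m)/2 = m := by omega
    have hCB : (2*m).choose m = Nat.centralBinom m := rfl
    have e1 : 2*(m+1) = (2*m+1)+1 := by ring
    rw [e1, Br_succ, if_neg hodd, Br_succ, if_pos heven, hhalf, hCB, add_zero]
    have hss := sqrt_step m
    have h4 : (0:ℝ) < (4:ℝ)^m := by positivity
    have hmul := mul_le_mul_of_nonneg_right hss (le_of_lt (by positivity : (0:ℝ) < 4*(4:ℝ)^m))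
    have hc : Real.sqrt ((m:ℕ)+1:ℕ) * 4^(m+1)
        = Real.sqrt ((m:ℝ)+1) * (4*(4:ℝ)^m) := by push_cast; ring
    push_cast at hc ⊢
    calc Real.sqrt ((m:ℝ)+1) * 4^(m+1)
        = Real.sqrt ((m:ℝ)+1) * (4*(4:ℝ)^m) := by ring
      _ ≤ (Real.sqrt m + (Nat.centralBinom m : ℝ)/4^m) * (4*(4:ℝ)^m) := hmul
      _ = 4 * (Real.sqrt m * 4^m) + 4 * (Nat.centralBinom m : ℝ) := by field_simp
      _ ≤ 4 * Br (2*m) + 4 * (Nat.centralBinom m : ℝ) := by linarith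
      _ = 2 * (2 * Br (2*m) + 2*(Nat.centralBinom m : ℝ)) := by ring

lemma Br_ge (n : ℕ) : Real.sqrt ((n:ℝ)/2) * 2^n ≤ Br n := by
  rcases Nat.even_or_odd n with ⟨m, hm⟩ | ⟨m, hm⟩
  · subst hm
    have h1 : ((m+m:ℕ):ℝ)/2 = (m:ℝ) := by push_cast; ring
    have h2 : (2:ℝ)^(m+m) = 4^m := by
      rw [pow_add, ← mul_pow]; norm_num
    rw [h1, h2, show m + m = 2*m by ring]
    exact Br_even m
  · subst hm
    have heven : Even (2*m) := ⟨m, by ring⟩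
    have hhalf : (2*m)/2 = m := by omega
    have hCB : (2*m).choose m = Nat.centralBinom m := rfl
    rw [Br_succ, if_pos heven, hhalf, hCB]
    have hss := sqrt_step m
    have h4 : (0:ℝ) < (4:ℝ)^m := by positivity
    have hmono : Real.sqrt (((2*m+1:ℕ):ℝ)/2) ≤ Real.sqrt ((m:ℝ)+1) := by
      apply Real.sqrt_le_sqrt
      push_cast
      linarith
    have h2pow : (2:ℝ)^(2*m+1) = 2 * 4^m := by
      rw [pow_succ, pow_mul]; norm_num; ring
    calc Real.sqrt (((2*m+1:ℕ):ℝ)/2) * 2^(2*m+1)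
        ≤ Real.sqrt ((m:ℝ)+1) * (2 * 4^m) := by
          rw [h2pow]
          apply mul_le_mul_of_nonneg_right hmono (by positivity)
      _ ≤ (Real.sqrt m + (Nat.centralBinom m : ℝ)/4^m) * (2 * 4^m) := by
          apply mul_le_mul_of_nonneg_right hss (by positivity)
      _ = 2 * (Real.sqrt m * 4^m) + 2 * (Nat.centralBinom m : ℝ) := by field_simp
      _ ≤ 2 * Br (2*m) + 2 * (Nat.centralBinom m : ℝ) := by
          have := Br_even m; linarith

def sgnB (b : Bool) : ℝ := if b then 1 else -1

lemma abs_sgnB (b : Bool) : |sgnB b| = 1 := by cases b <;> simp [sgnB]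

def finsetBoolEquiv (n : ℕ) : Finset (Fin n) ≃ (Fin n → Bool) where
  toFun A t := decide (t ∈ A)
  invFun ε := Finset.univ.filter (fun t => ε t = true)
  left_inv A := by ext t; simp
  right_inv ε := by funext t; simp

lemma sum_sgnB_card {n : ℕ} (A : Finset (Fin n)) :
    ∑ t : Fin n, sgnB (decide (t ∈ A)) = 2*(A.card:ℝ) - n := by
  have hsplit : ∑ t : Fin n, sgnB (decide (t ∈ A))
      = ∑ t ∈ A, (1:ℝ) + ∑ t ∈ Finset.univ.filter (fun t => t ∉ A), (-1:ℝ) := by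
    rw [← Finset.sum_filter_add_sum_filter_not Finset.univ (fun t => t ∈ A)]
    congr 1
    · rw [Finset.filter_mem_eq_inter, Finset.univ_inter]
      exact Finset.sum_congr rfl fun t ht => by simp [sgnB, ht]
    · exact Finset.sum_congr rfl fun t ht => by
        simp only [Finset.mem_filter] at ht
        simp [sgnB, ht.2]
  rw [hsplit, Finset.sum_const, Finset.sum_const]
  have hcard : (Finset.univ.filter (fun t : Fin n => t ∉ A)).card = n - A.card := by
    have := Finset.card_filter_add_card_filter_not (s := (Finset.univ : Finset (Fin n)))
      (p := fun t => t ∈ A)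
    simp only [Finset.card_univ, Fintype.card_fin] at this
    have hA : (Finset.univ.filter (fun t : Fin n => t ∈ A)).card = A.card := by
      congr 1
      rw [Finset.filter_mem_eq_inter, Finset.univ_inter]
    omega
  rw [hcard]
  have hle : A.card ≤ n := by
    have := Finset.card_le_card (Finset.subset_univ A)
    simpa using this
  simp only [nsmul_eq_mul, mul_one, mul_neg_one]
  rw [Nat.cast_sub hle]
  ring

lemma sum_abs_signs (n : ℕ) :
    ∑ ε : Fin n → Bool, |∑ t : Fin n, sgnB (ε t)| = Br n := by
  rw [← Equiv.sum_comp (finsetBoolEquiv n) (fun ε => |∑ t : Fin n, sgnB (ε t)|)]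
  have h1 : ∀ A : Finset (Fin n),
      |∑ t : Fin n, sgnB ((finsetBoolEquiv n) A t)| = |2*(A.card:ℝ) - n| := by
    intro A
    rw [show (∑ t : Fin n, sgnB ((finsetBoolEquiv n) A t)) = ∑ t : Fin n, sgnB (decide (t ∈ A)) from rfl,
      sum_sgnB_card]
  rw [Finset.sum_congr rfl (fun A _ => h1 A)]
  rw [← Finset.powerset_univ, Finset.sum_powerset_apply_card (fun m => |2*(m:ℝ) - n|)]
  simp only [Finset.card_univ, Fintype.card_fin, nsmul_eq_mul]
  rfl

lemma sum_sign_mul {n : ℕ} (t : Fin n) (g : (Fin n → Bool) → ℝ)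
    (hg : ∀ ε b, g (Function.update ε t b) = g ε) :
    ∑ ε : Fin n → Bool, sgnB (ε t) * g ε = 0 := by
  apply Finset.sum_ninvolution (g := fun ε => Function.update ε t (!ε t))
  · intro ε
    rw [hg]
    have : sgnB ((Function.update ε t (!ε t)) t) = - sgnB (ε t) := by
      rw [Function.update_self]; cases ε t <;> simp [sgnB]
    rw [this]; ring
  · intro ε _
    intro heq
    have := congrFun heq t
    rw [Function.update_self] at this
    cases h : ε t <;> rw [h] at this <;> simp at this
  · intro ε; exact Finset.mem_univ _
  · intro ε
    funext s
    by_cases hs : s = t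
    · subst hs; simp
    · simp [Function.update_of_ne hs]

/-- **Minimax lower bound for online linear optimization (Abernethy et al.).**
Let `X ⊆ ℝ^d` be compact convex with Euclidean diameter `D`, containing two points at
distance `D`, and let `L > 0`.  For every deterministic online algorithm (a family of maps
assigning to each history `(v_1, …, v_{t−1})` a point `x_t ∈ X`) and every horizon `T`,
there are vectors `v_t` with `‖v_t‖ ≤ L` such that the linear losses `ℓ_t(x) = −⟨v_t, x⟩`
force regret `R_T ≥ (D L/(2√2)) √T`. -/
theorem online_linear_minimax_lower_bound
    {d : ℕ} (X : Set (EuclideanSpace ℝ (Fin d)))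
    (hXcomp : IsCompact X) (hXcv : Convex ℝ X)
    (D L : ℝ) (hL : 0 < L) (hD : Metric.diam X = D)
    (hpts : ∃ p ∈ X, ∃ q ∈ X, dist p q = D)
    (alg : (t : ℕ) → (Fin t → EuclideanSpace ℝ (Fin d)) → EuclideanSpace ℝ (Fin d))
    (halg : ∀ t h, alg t h ∈ X) (T : ℕ) :
    ∃ v : ℕ → EuclideanSpace ℝ (Fin d),
      (∀ t, ‖v t‖ ≤ L) ∧
      (∑ t ∈ Finset.range T, -(inner ℝ (v t) (alg t fun s => v ↑s) : ℝ)) -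
          sInf ((fun z => ∑ t ∈ Finset.range T, -(inner ℝ (v t) z : ℝ)) '' X) ≥
        D * L / (2 * Real.sqrt 2) * Real.sqrt T := by
  have hDnn : 0 ≤ D := hD ▸ Metric.diam_nonneg
  obtain ⟨p, hp, q, hq, hpq⟩ := hpts
  rcases eq_or_lt_of_le hDnn with hD0 | hD0
  · -- degenerate case D = 0 : take v = 0
    refine ⟨fun _ => 0, fun t => by simp [hL.le], ?_⟩
    simp only [inner_zero_left, neg_zero, Finset.sum_const_zero]
    rw [Set.Nonempty.image_const ⟨p, hp⟩, csInf_singleton, ← hD0]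
    simp
  · -- main case D > 0
    have hDne : D ≠ 0 := ne_of_gt hD0
    set u : EuclideanSpace ℝ (Fin d) := D⁻¹ • (q - p) with hu_def
    have hqp : ‖q - p‖ = D := by rw [← hpq, dist_eq_norm, norm_sub_rev]
    have hu_norm : ‖u‖ = 1 := by
      rw [hu_def, norm_smul, hqp, Real.norm_eq_abs, abs_of_pos (inv_pos.mpr hD0),
        inv_mul_cancel₀ hDne]
    have huqp : (inner ℝ u (q - p) : ℝ) = D := by
      rw [hu_def, real_inner_smul_left, real_inner_self_eq_norm_sq, hqp]
      field_simp
    set V : (Fin T → Bool) → ℕ → EuclideanSpace ℝ (Fin d) :=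
      fun ε t => if h : t < T then (L * sgnB (ε ⟨t, h⟩)) • u else 0 with hV
    have hVlt : ∀ ε (t : ℕ) (h : t < T), V ε t = (L * sgnB (ε ⟨t, h⟩)) • u := by
      intro ε t h; rw [hV]; exact dif_pos h
    have hVnorm : ∀ ε (t : ℕ), ‖V ε t‖ ≤ L := by
      intro ε t
      by_cases h : t < T
      · rw [hVlt ε t h, norm_smul, hu_norm, mul_one, Real.norm_eq_abs, abs_mul,
          abs_sgnB, mul_one, abs_of_pos hL]
      · rw [hV]; simp [h, hL.le]
    have hVsum : ∀ ε (w : ℕ → EuclideanSpace ℝ (Fin d)),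
        (∑ t ∈ Finset.range T, -(inner ℝ (V ε t) (w t) : ℝ))
          = ∑ t : Fin T, -(L * sgnB (ε t) * (inner ℝ u (w ↑t) : ℝ)) := by
      intro ε w
      rw [← Fin.sum_univ_eq_sum_range (fun t => -(inner ℝ (V ε t) (w t) : ℝ)) T]
      refine Finset.sum_congr rfl fun i _ => ?_
      rw [hVlt ε ↑i i.isLt, real_inner_smul_left, Fin.eta]
    have hVsum' : ∀ ε (z : EuclideanSpace ℝ (Fin d)),
        (∑ t ∈ Finset.range T, -(inner ℝ (V ε t) z : ℝ))
          = -(L * (∑ t : Fin T, sgnB (ε t)) * (inner ℝ u z : ℝ)) := by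
      intro ε z
      rw [hVsum ε (fun _ => z)]
      calc ∑ t : Fin T, -(L * sgnB (ε t) * (inner ℝ u z : ℝ))
          = ∑ t : Fin T, sgnB (ε t) * (-(L * (inner ℝ u z : ℝ))) :=
            Finset.sum_congr rfl fun t _ => by ring
        _ = (∑ t : Fin T, sgnB (ε t)) * (-(L * (inner ℝ u z : ℝ))) := (Finset.sum_mul _ _ _).symm
        _ = -(L * (∑ t : Fin T, sgnB (ε t)) * (inner ℝ u z : ℝ)) := by ring
    set c0 : ℝ := ((inner ℝ u p : ℝ) + (inner ℝ u q : ℝ))/2 with hc0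
    -- per-ε key inequality
    have key : ∀ ε : Fin T → Bool,
        (∑ t : Fin T, sgnB (ε t) * (L * (c0 - (inner ℝ u (alg ↑t fun s => V ε ↑s) : ℝ))))
            + L * |∑ t : Fin T, sgnB (ε t)| * D / 2
          ≤ (∑ t ∈ Finset.range T, -(inner ℝ (V ε t) (alg t fun s => V ε ↑s) : ℝ))
            - sInf ((fun z => ∑ t ∈ Finset.range T, -(inner ℝ (V ε t) z : ℝ)) '' X) := by
      intro ε
      set S : ℝ := ∑ t : Fin T, sgnB (ε t) with hS
      have hcont : Continuous fun z : EuclideanSpace ℝ (Fin d) =>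
          ∑ t ∈ Finset.range T, -(inner ℝ (V ε t) z : ℝ) :=
        continuous_finset_sum _ fun i _ => (Continuous.inner continuous_const continuous_id).neg
      have hbdd : BddBelow ((fun z => ∑ t ∈ Finset.range T, -(inner ℝ (V ε t) z : ℝ)) '' X) :=
        (hXcomp.image hcont).bddBelow
      have hfp : sInf ((fun z => ∑ t ∈ Finset.range T, -(inner ℝ (V ε t) z : ℝ)) '' X)
          ≤ -(L * S * (inner ℝ u p : ℝ)) := by
        rw [← hVsum' ε p]; exact csInf_le hbdd ⟨p, hp, rfl⟩
      have hfq : sInf ((fun z => ∑ t ∈ Finset.range T, -(inner ℝ (V ε t) z : ℝ)) '' X)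
          ≤ -(L * S * (inner ℝ u q : ℝ)) := by
        rw [← hVsum' ε q]; exact csInf_le hbdd ⟨q, hq, rfl⟩
      have hD' : (inner ℝ u q : ℝ) - (inner ℝ u p : ℝ) = D := by
        rw [← inner_sub_right]; exact huqp
      have habs : |L * S * (inner ℝ u q : ℝ) - L * S * (inner ℝ u p : ℝ)| = L * |S| * D := by
        have h1 : L * S * (inner ℝ u q : ℝ) - L * S * (inner ℝ u p : ℝ) = (L * S) * D := by
          rw [← hD']; ring
        rw [h1, abs_mul, abs_mul, abs_of_pos hL, abs_of_pos hD0]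
      have halgsum : (∑ t ∈ Finset.range T, -(inner ℝ (V ε t) (alg t fun s => V ε ↑s) : ℝ))
          = ∑ t : Fin T, -(L * sgnB (ε t) * (inner ℝ u (alg ↑t fun s => V ε ↑s) : ℝ)) :=
        hVsum ε _
      have hcross : (∑ t : Fin T, sgnB (ε t) * (L * (c0 - (inner ℝ u (alg ↑t fun s => V ε ↑s) : ℝ))))
          = L * S * c0
            + ∑ t : Fin T, -(L * sgnB (ε t) * (inner ℝ u (alg ↑t fun s => V ε ↑s) : ℝ)) := by
        calc (∑ t : Fin T, sgnB (ε t) * (L * (c0 - (inner ℝ u (alg ↑t fun s => V ε ↑s) : ℝ))))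
            = ∑ t : Fin T, (sgnB (ε t) * (L * c0)
                + -(L * sgnB (ε t) * (inner ℝ u (alg ↑t fun s => V ε ↑s) : ℝ))) :=
              Finset.sum_congr rfl fun t _ => by ring
          _ = (∑ t : Fin T, sgnB (ε t) * (L * c0))
                + ∑ t : Fin T, -(L * sgnB (ε t) * (inner ℝ u (alg ↑t fun s => V ε ↑s) : ℝ)) :=
              Finset.sum_add_distrib
          _ = L * S * c0
                + ∑ t : Fin T, -(L * sgnB (ε t) * (inner ℝ u (alg ↑t fun s => V ε ↑s) : ℝ)) := by
              rw [← Finset.sum_mul, hS]; ring_nf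
      have hmax : (L * S * (inner ℝ u p : ℝ) + L * S * (inner ℝ u q : ℝ))/2 + L * |S| * D / 2
          ≤ - sInf ((fun z => ∑ t ∈ Finset.range T, -(inner ℝ (V ε t) z : ℝ)) '' X) := by
        rcases le_total (L * S * (inner ℝ u p : ℝ)) (L * S * (inner ℝ u q : ℝ)) with hcase | hcase
        · have h2 : L * |S| * D = L * S * (inner ℝ u q : ℝ) - L * S * (inner ℝ u p : ℝ) :=
            habs.symm.trans (abs_of_nonneg (by linarith))
          linarith
        · have habs' : |L * S * (inner ℝ u p : ℝ) - L * S * (inner ℝ u q : ℝ)| = L * |S| * D := by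
            rw [abs_sub_comm]; exact habs
          have h2 : L * |S| * D = L * S * (inner ℝ u p : ℝ) - L * S * (inner ℝ u q : ℝ) :=
            habs'.symm.trans (abs_of_nonneg (by linarith))
          linarith
      rw [halgsum, hcross, hc0] at *
      linarith [hmax]
    have hcross_total : ∑ ε : Fin T → Bool,
        (∑ t : Fin T, sgnB (ε t) * (L * (c0 - (inner ℝ u (alg ↑t fun s => V ε ↑s) : ℝ)))) = 0 := by
      rw [Finset.sum_comm]
      refine Finset.sum_eq_zero fun t _ => ?_
      apply sum_sign_mul t (fun ε => L * (c0 - (inner ℝ u (alg ↑t fun s => V ε ↑s) : ℝ)))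
      intro ε b
      have harg : (fun s : Fin (↑t : ℕ) => V (Function.update ε t b) ↑s)
          = fun s : Fin (↑t : ℕ) => V ε ↑s := by
        funext s
        have hsT : (↑s : ℕ) < T := lt_trans s.isLt t.isLt
        rw [hVlt _ _ hsT, hVlt _ _ hsT]
        have hne : (⟨↑s, hsT⟩ : Fin T) ≠ t := Fin.ne_of_val_ne (Nat.ne_of_lt s.isLt)
        rw [Function.update_of_ne hne b ε]
      rw [harg]
    have hBr : ∑ ε : Fin T → Bool, L * |∑ t : Fin T, sgnB (ε t)| * D / 2
        = (L * D / 2) * Br T := by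
      rw [← sum_abs_signs T, Finset.mul_sum]
      exact Finset.sum_congr rfl fun ε _ => by ring
    have h1 : ∑ ε : Fin T → Bool,
        ((∑ t : Fin T, sgnB (ε t) * (L * (c0 - (inner ℝ u (alg ↑t fun s => V ε ↑s) : ℝ))))
          + L * |∑ t : Fin T, sgnB (ε t)| * D / 2)
        ≤ ∑ ε : Fin T → Bool,
            ((∑ t ∈ Finset.range T, -(inner ℝ (V ε t) (alg t fun s => V ε ↑s) : ℝ))
              - sInf ((fun z => ∑ t ∈ Finset.range T, -(inner ℝ (V ε t) z : ℝ)) '' X)) :=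
      Finset.sum_le_sum fun ε _ => key ε
    have h2 : ∑ ε : Fin T → Bool,
        ((∑ t : Fin T, sgnB (ε t) * (L * (c0 - (inner ℝ u (alg ↑t fun s => V ε ↑s) : ℝ))))
          + L * |∑ t : Fin T, sgnB (ε t)| * D / 2) = (L * D / 2) * Br T := by
      rw [Finset.sum_add_distrib, hcross_total, zero_add, hBr]
    have h3 : ∑ _ε : Fin T → Bool, (D * L / (2 * Real.sqrt 2) * Real.sqrt T)
        = (2^T : ℝ) * (D * L / (2 * Real.sqrt 2) * Real.sqrt T) := by
      rw [Finset.sum_const, Finset.card_univ, Fintype.card_fun, Fintype.card_bool,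
        Fintype.card_fin, nsmul_eq_mul]
      push_cast; ring
    have h4 : (2^T : ℝ) * (D * L / (2 * Real.sqrt 2) * Real.sqrt T) ≤ (L * D / 2) * Br T := by
      have hb := Br_ge T
      have hfac : (0:ℝ) ≤ L * D / 2 := by positivity
      have h5 : (L * D / 2) * (Real.sqrt ((T:ℝ)/2) * 2^T) ≤ (L * D / 2) * Br T :=
        mul_le_mul_of_nonneg_left hb hfac
      have h6 : (2^T : ℝ) * (D * L / (2 * Real.sqrt 2) * Real.sqrt T)
          = (L * D / 2) * (Real.sqrt ((T:ℝ)/2) * 2^T) := by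
        rw [Real.sqrt_div (by positivity) 2]
        have hs2 : Real.sqrt 2 ≠ 0 := by positivity
        field_simp
      linarith
    have hsum_le : ∑ _ε : Fin T → Bool, (D * L / (2 * Real.sqrt 2) * Real.sqrt T)
        ≤ ∑ ε : Fin T → Bool,
            ((∑ t ∈ Finset.range T, -(inner ℝ (V ε t) (alg t fun s => V ε ↑s) : ℝ))
              - sInf ((fun z => ∑ t ∈ Finset.range T, -(inner ℝ (V ε t) z : ℝ)) '' X)) := by
      linarith
    obtain ⟨ε, _, hε⟩ := Finset.exists_le_of_sum_le Finset.univ_nonempty hsum_le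
    exact ⟨V ε, hVnorm ε, hε⟩
end

section
/- Let X ⊆ ℝ^d be compact and convex, let ‖·‖ be a norm on ℝ^d with dual norm ‖·‖_*, and let h : X → ℝ be a differentiable regularizer that is K-strongly convex with respect to ‖·‖. Let ℓ_1, …, ℓ_T : X → ℝ be convex and differentiable with ‖∇ℓ_t(x)‖_* ≤ L for all x ∈ X and all t. Then the online mirror descent iterates x_{t+1} ∈ argmin_{x∈X} { γ ⟨∇ℓ_t(x_t), x⟩ + D_h(x, x_t) }, run with step-size γ = L^{−1} √(2K (max_X h − min_X h)/T) from x_1 = argmin_X h, satisfy R_T = Σ_{t=1}^T ℓ_t(x_t) − min_{x∈X} Σ_{t=1}^T ℓ_t(x) ≤ 2 L √( (max_X h − min_X h) · T / (2K) ). -/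
private lemma aux_sum_N {E : Type*} [AddCommGroup E] (N : E → ℝ)
    (h0 : N 0 = 0) (hadd : ∀ z w, N (z + w) ≤ N z + N w)
    {ι : Type*} (s : Finset ι) (f : ι → E) :
    N (∑ i ∈ s, f i) ≤ ∑ i ∈ s, N (f i) := by
  classical
  induction s using Finset.induction with
  | empty => simp [h0]
  | insert _ _ hi ih =>
    rw [Finset.sum_insert hi, Finset.sum_insert hi]
    exact (hadd _ _).trans (by linarith)

private lemma aux_N_nonneg {E : Type*} [AddCommGroup E] [Module ℝ E] (N : E → ℝ)
    (hadd : ∀ z w, N (z + w) ≤ N z + N w)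
    (hsmul : ∀ (c : ℝ) z, N (c • z) = |c| * N z)
    (hzero : ∀ z, N z = 0 ↔ z = 0) (z : E) : 0 ≤ N z := by
  have h0 : N 0 = 0 := (hzero 0).mpr rfl
  have hneg : N (-z) = N z := by
    rw [← neg_one_smul ℝ z, hsmul]; simp
  have := hadd z (-z)
  simp [h0, hneg] at this
  linarith

private lemma aux_N_le {d : ℕ} (N : EuclideanSpace ℝ (Fin d) → ℝ)
    (hadd : ∀ z w, N (z + w) ≤ N z + N w)
    (hsmul : ∀ (c : ℝ) z, N (c • z) = |c| * N z)
    (hzero : ∀ z, N z = 0 ↔ z = 0) :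
    ∃ C > 0, ∀ z, N z ≤ C * ‖z‖ := by
  classical
  have hnn := aux_N_nonneg N hadd hsmul hzero
  have h0 : N 0 = 0 := (hzero 0).mpr rfl
  set b := EuclideanSpace.basisFun (Fin d) ℝ with hb
  have hCnn : (0:ℝ) ≤ ∑ i, N (b i) := Finset.sum_nonneg fun i _ => hnn _
  refine ⟨(∑ i, N (b i)) + 1, by linarith, fun z => ?_⟩
  have hcoord : ∀ i, |z i| ≤ ‖z‖ := by
    intro i
    rw [EuclideanSpace.norm_eq]
    rw [← Real.sqrt_sq (abs_nonneg (z i))]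
    apply Real.sqrt_le_sqrt
    calc |z i|^2 = ‖z i‖^2 := by rw [Real.norm_eq_abs]
    _ ≤ ∑ j, ‖z j‖^2 := Finset.single_le_sum (f := fun j => ‖z j‖^2)
        (fun j _ => by positivity) (Finset.mem_univ i)
  have hrepr : z = ∑ i, z i • b i := by
    have := b.sum_repr z
    simp only [hb, EuclideanSpace.basisFun_repr] at this
    exact this.symm
  calc N z = N (∑ i, z i • b i) := by rw [← hrepr]
    _ ≤ ∑ i, N (z i • b i) := aux_sum_N N h0 hadd _ _
    _ = ∑ i, |z i| * N (b i) := by simp [hsmul]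
    _ ≤ ∑ i, ‖z‖ * N (b i) := by
        apply Finset.sum_le_sum
        intro i _
        exact mul_le_mul_of_nonneg_right (hcoord i) (hnn _)
    _ = (∑ i, N (b i)) * ‖z‖ := by rw [← Finset.mul_sum, mul_comm]
    _ ≤ ((∑ i, N (b i)) + 1) * ‖z‖ := by
        apply mul_le_mul_of_nonneg_right _ (norm_nonneg _); linarith

private lemma aux_N_ge {d : ℕ} (N : EuclideanSpace ℝ (Fin d) → ℝ)
    (hadd : ∀ z w, N (z + w) ≤ N z + N w)
    (hsmul : ∀ (c : ℝ) z, N (c • z) = |c| * N z)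
    (hzero : ∀ z, N z = 0 ↔ z = 0) :
    ∃ c > 0, ∀ z, c * ‖z‖ ≤ N z := by
  classical
  have hnn := aux_N_nonneg N hadd hsmul hzero
  have h0 : N 0 = 0 := (hzero 0).mpr rfl
  obtain ⟨C, hCpos, hC⟩ := aux_N_le N hadd hsmul hzero
  by_cases hE : ∀ z : EuclideanSpace ℝ (Fin d), z = 0
  · exact ⟨1, one_pos, fun z => by rw [hE z]; simp [h0]⟩
  push_neg at hE
  obtain ⟨z0, hz0⟩ := hE
  -- N is Lipschitz hence continuous
  have hlip : ∀ a c : EuclideanSpace ℝ (Fin d), N a - N c ≤ C * ‖a - c‖ := by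
    intro a c
    have := hadd (a - c) c
    simp only [sub_add_cancel] at this
    have := hC (a - c)
    linarith
  have hcont : Continuous N := by
    apply LipschitzWith.continuous (K := C.toNNReal)
    apply LipschitzWith.of_dist_le_mul
    intro a c
    rw [Real.dist_eq, dist_eq_norm, Real.coe_toNNReal _ hCpos.le, abs_sub_le_iff]
    constructor
    · exact hlip a c
    · have := hlip c a
      rwa [← norm_neg, neg_sub] at this
  have hsph : (Metric.sphere (0 : EuclideanSpace ℝ (Fin d)) 1).Nonempty := by
    refine ⟨‖z0‖⁻¹ • z0, ?_⟩
    simp [norm_smul, abs_inv, inv_mul_cancel₀ (norm_ne_zero_iff.mpr hz0)]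
  obtain ⟨w0, hw0mem, hw0min⟩ :=
    (isCompact_sphere (0 : EuclideanSpace ℝ (Fin d)) 1).exists_isMinOn hsph
      hcont.continuousOn
  have hw0norm : ‖w0‖ = 1 := by simpa using hw0mem
  have hcpos : 0 < N w0 := by
    rcases (hnn w0).lt_or_eq with h | h
    · exact h
    · exfalso
      have : w0 = 0 := (hzero w0).mp h.symm
      rw [this] at hw0norm; simp at hw0norm
  refine ⟨N w0, hcpos, fun z => ?_⟩
  by_cases hz : z = 0
  · simp [hz, h0]
  have hznorm : (0:ℝ) < ‖z‖ := norm_pos_iff.mpr hz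
  have hmem : ‖z‖⁻¹ • z ∈ Metric.sphere (0 : EuclideanSpace ℝ (Fin d)) 1 := by
    simp [norm_smul, abs_inv, inv_mul_cancel₀ hznorm.ne']
  have h1 : N w0 ≤ N (‖z‖⁻¹ • z) := hw0min hmem
  rw [hsmul, abs_inv, abs_of_pos hznorm] at h1
  calc N w0 * ‖z‖ ≤ (‖z‖⁻¹ * N z) * ‖z‖ :=
        mul_le_mul_of_nonneg_right h1 hznorm.le
    _ = N z := by field_simp

private lemma aux_CS {d : ℕ} (N : EuclideanSpace ℝ (Fin d) → ℝ)
    (hadd : ∀ z w, N (z + w) ≤ N z + N w)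
    (hsmul : ∀ (c : ℝ) z, N (c • z) = |c| * N z)
    (hzero : ∀ z, N z = 0 ↔ z = 0)
    (Nd : EuclideanSpace ℝ (Fin d) → ℝ)
    (hNd : ∀ w, Nd w = sSup ((fun z => (inner ℝ w z : ℝ)) '' {z | N z ≤ 1}))
    (w v : EuclideanSpace ℝ (Fin d)) :
    (inner ℝ w v : ℝ) ≤ Nd w * N v := by
  have hnn := aux_N_nonneg N hadd hsmul hzero
  have h0 : N 0 = 0 := (hzero 0).mpr rfl
  obtain ⟨c, hcpos, hc⟩ := aux_N_ge N hadd hsmul hzero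
  have hbdd : BddAbove ((fun z => (inner ℝ w z : ℝ)) '' {z | N z ≤ 1}) := by
    refine ⟨‖w‖ * c⁻¹, fun y hy => ?_⟩
    obtain ⟨u, hu, rfl⟩ := hy
    have h1 : ‖u‖ ≤ c⁻¹ := by
      have h2 : c * ‖u‖ ≤ 1 := le_trans (hc u) hu
      have h3 : c * c⁻¹ = 1 := mul_inv_cancel₀ hcpos.ne'
      nlinarith
    calc (inner ℝ w u : ℝ) ≤ ‖w‖ * ‖u‖ := real_inner_le_norm w u
      _ ≤ ‖w‖ * c⁻¹ := mul_le_mul_of_nonneg_left h1 (norm_nonneg _)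
  by_cases hv : v = 0
  · simp [hv, h0]
  have hNv : 0 < N v := by
    rcases (hnn v).lt_or_eq with h | h
    · exact h
    · exact absurd ((hzero v).mp h.symm) hv
  set u := (N v)⁻¹ • v with hu
  have hNu : N u ≤ 1 := by
    rw [hu, hsmul, abs_inv, abs_of_pos hNv, inv_mul_cancel₀ hNv.ne']
  have hmem : (inner ℝ w u : ℝ) ∈ (fun z => (inner ℝ w z : ℝ)) '' {z | N z ≤ 1} :=
    ⟨u, hNu, rfl⟩
  have hle : (inner ℝ w u : ℝ) ≤ Nd w := by
    rw [hNd]; exact le_csSup hbdd hmem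
  have hvu : v = N v • u := by
    rw [hu, smul_smul, mul_inv_cancel₀ hNv.ne', one_smul]
  have key : (inner ℝ w v : ℝ) = N v * (inner ℝ w u : ℝ) := by
    conv_lhs => rw [hvu]
    exact real_inner_smul_right w u (N v)
  rw [key, mul_comm (Nd w) (N v)]
  exact mul_le_mul_of_nonneg_left hle hNv.le


private lemma aux_min_grad {d : ℕ} {X : Set (EuclideanSpace ℝ (Fin d))}
    (hXcv : Convex ℝ X)
    {φ : EuclideanSpace ℝ (Fin d) → ℝ} {gφ a : EuclideanSpace ℝ (Fin d)}
    (ha : a ∈ X) (hd : HasGradientWithinAt φ gφ X a)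
    (hmin : ∀ z ∈ X, φ a ≤ φ z) {z : EuclideanSpace ℝ (Fin d)} (hz : z ∈ X) :
    0 ≤ (inner ℝ gφ (z - a) : ℝ) := by
  have hloc : IsLocalMinOn φ X a := (isMinOn_iff.mpr hmin).localize
  have hy : z - a ∈ posTangentConeAt X a :=
    sub_mem_posTangentConeAt_of_segment_subset (hXcv.segment_subset ha hz)
  have := hloc.hasFDerivWithinAt_nonneg hd.hasFDerivWithinAt hy
  simpa [InnerProductSpace.toDual_apply_apply] using this

private lemma aux_convex_grad {d : ℕ} {X : Set (EuclideanSpace ℝ (Fin d))}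
    (hXcv : Convex ℝ X)
    {f : EuclideanSpace ℝ (Fin d) → ℝ} {gf a z : EuclideanSpace ℝ (Fin d)}
    (ha : a ∈ X) (hz : z ∈ X)
    (hcf : ConvexOn ℝ X f) (hd : HasGradientWithinAt f gf X a) :
    f a + (inner ℝ gf (z - a) : ℝ) ≤ f z := by
  set c : ℝ → EuclideanSpace ℝ (Fin d) := fun s => a + s • (z - a) with hcdef
  have hc : HasDerivWithinAt c (z - a) (Set.Icc (0:ℝ) 1) 0 := by
    have : HasDerivAt c (z - a) 0 := by
      have h1 : HasDerivAt (fun s : ℝ => s • (z - a)) (z - a) 0 := by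
        simpa using (hasDerivAt_id (0:ℝ)).smul_const (z - a)
      simpa [hcdef] using h1.const_add a
    exact this.hasDerivWithinAt
  have hmaps : Set.MapsTo c (Set.Icc (0:ℝ) 1) X := by
    intro s hs
    have : c s = (1 - s) • a + s • z := by
      simp [hcdef]
      module
    rw [this]
    exact hXcv ha hz (by linarith [hs.2]) hs.1 (by ring)
  have hca : c 0 = a := by simp [hcdef]
  have hcomp : HasDerivWithinAt (f ∘ c) (inner ℝ gf (z - a) : ℝ) (Set.Icc (0:ℝ) 1) 0 := by
    have := hd.hasFDerivWithinAt.comp_hasDerivWithinAt_of_eq (x := (0:ℝ)) hc hmaps hca.symm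
    simpa [InnerProductSpace.toDual_apply_apply] using this
  have hslope := hasDerivWithinAt_iff_tendsto_slope.mp hcomp
  have hIcc : Set.Icc (0:ℝ) 1 \ {0} = Set.Ioc (0:ℝ) 1 := by
    ext s
    simp only [Set.mem_diff, Set.mem_Icc, Set.mem_singleton_iff, Set.mem_Ioc]
    constructor
    · rintro ⟨⟨h1, h2⟩, h3⟩; exact ⟨lt_of_le_of_ne h1 (Ne.symm h3), h2⟩
    · rintro ⟨h1, h2⟩; exact ⟨⟨h1.le, h2⟩, h1.ne'⟩
  rw [hIcc] at hslope
  have hne : (nhdsWithin (0:ℝ) (Set.Ioc 0 1)).NeBot := by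
    rw [mem_closure_iff_nhdsWithin_neBot.symm, closure_Ioc (by norm_num : (0:ℝ) ≠ 1)]
    exact ⟨le_refl 0, by norm_num⟩
  have hbound : ∀ s ∈ Set.Ioc (0:ℝ) 1, slope (f ∘ c) 0 s ≤ f z - f a := by
    intro s hs
    have hs0 : 0 < s := hs.1
    have hcs : c s = (1 - s) • a + s • z := by simp [hcdef]; module
    have hconv := hcf.2 ha hz (by linarith [hs.2] : (0:ℝ) ≤ 1 - s) hs0.le (by ring)
    rw [← hcs] at hconv
    simp only [smul_eq_mul] at hconv
    rw [slope_def_field]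
    simp only [Function.comp_apply, hca, sub_zero]
    rw [div_le_iff₀ hs0]
    calc f (c s) - f a ≤ ((1-s) * f a + s * f z) - f a := by linarith
      _ = (f z - f a) * s := by ring
  have hlim : (inner ℝ gf (z - a) : ℝ) ≤ f z - f a := by
    refine le_of_tendsto hslope ?_
    exact eventually_nhdsWithin_of_forall hbound
  linarith


private lemma aux_grad_lin_add {d : ℕ} {X : Set (EuclideanSpace ℝ (Fin d))}
    {h : EuclideanSpace ℝ (Fin d) → ℝ} {ghb b : EuclideanSpace ℝ (Fin d)}
    (hh : HasGradientWithinAt h ghb X b) (v : EuclideanSpace ℝ (Fin d)) (C : ℝ) :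
    HasGradientWithinAt (fun w => (inner ℝ v w : ℝ) + h w + C) (v + ghb) X b := by
  rw [hasGradientWithinAt_iff_hasFDerivWithinAt]
  have h1 : HasFDerivWithinAt (fun w : EuclideanSpace ℝ (Fin d) => (inner ℝ v w : ℝ))
      (innerSL ℝ v) X b :=
    ((innerSL ℝ v).hasFDerivWithinAt).congr (fun w _ => by simp) (by simp)
  have h2 := hh.hasFDerivWithinAt
  have h3 := (h1.add h2).add_const C
  refine h3.congr_fderiv ?_
  ext w
  simp [InnerProductSpace.toDual_apply_apply, inner_add_left]

set_option maxHeartbeats 1000000 in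
open Set Finset in
/-- **Worst-case regret of online mirror descent.**
Let `X ⊆ ℝ^d` be compact convex, let `N` be a norm on `ℝ^d` with dual norm
`Nd v = sup{⟨v, z⟩ : N z ≤ 1}`, and let `h : X → ℝ` be a differentiable regularizer which is
`K`-strongly convex w.r.t. `N`.  Let `ℓ₁, …, ℓ_T : X → ℝ` be convex and differentiable with
`Nd(∇ℓ_t(x)) ≤ L` on `X`.  Then the online mirror descent iterates
`x_{t+1} ∈ argmin_{x∈X} {γ⟨∇ℓ_t(x_t), x⟩ + D_h(x, x_t)}`, run with step-size
`γ = L⁻¹ √(2K(max_X h − min_X h)/T)` from `x₁ = argmin_X h`, satisfy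
`R_T ≤ 2L √((max_X h − min_X h)·T/(2K))`. -/
theorem omd_worst_case_regret
    {d : ℕ} (X : Set (EuclideanSpace ℝ (Fin d)))
    (hXcomp : IsCompact X) (hXcv : Convex ℝ X) (hXne : X.Nonempty)
    -- `N` is a norm on ℝ^d, with dual norm `Nd`
    (N : EuclideanSpace ℝ (Fin d) → ℝ)
    (hN_add : ∀ z w, N (z + w) ≤ N z + N w)
    (hN_smul : ∀ (c : ℝ) z, N (c • z) = |c| * N z)
    (hN_eq_zero : ∀ z, N z = 0 ↔ z = 0)
    (Nd : EuclideanSpace ℝ (Fin d) → ℝ)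
    (hNd : ∀ w, Nd w = sSup ((fun z => (inner ℝ w z : ℝ)) '' {z | N z ≤ 1}))
    -- the regularizer `h`, differentiable with gradient `gh`, `K`-strongly convex w.r.t. `N`
    (h : EuclideanSpace ℝ (Fin d) → ℝ)
    (gh : EuclideanSpace ℝ (Fin d) → EuclideanSpace ℝ (Fin d))
    (hgh : ∀ z ∈ X, HasGradientWithinAt h (gh z) X z)
    (K : ℝ) (hK : 0 < K)
    (hstrong : ∀ z ∈ X, ∀ w ∈ X,
      h w ≥ h z + (inner ℝ (gh z) (w - z) : ℝ) + (K / 2) * (N (w - z)) ^ 2)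
    -- the losses, convex and differentiable with gradients `g` bounded in dual norm by `L`
    (T : ℕ) (ℓ : ℕ → EuclideanSpace ℝ (Fin d) → ℝ)
    (g : ℕ → EuclideanSpace ℝ (Fin d) → EuclideanSpace ℝ (Fin d))
    (hconv : ∀ t, ConvexOn ℝ X (ℓ t))
    (hgrad : ∀ t, ∀ z ∈ X, HasGradientWithinAt (ℓ t) (g t z) X z)
    (L : ℝ) (hL : 0 < L) (hgb : ∀ t, ∀ z ∈ X, Nd (g t z) ≤ L)
    -- the step-size
    (γ : ℝ)
    (hγ : γ = L⁻¹ * Real.sqrt (2 * K * (sSup (h '' X) - sInf (h '' X)) / T))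
    -- the online mirror descent iterates
    (x : ℕ → EuclideanSpace ℝ (Fin d))
    (hx1 : x 0 ∈ X ∧ ∀ z ∈ X, h (x 0) ≤ h z)
    (hrec : ∀ t, x (t + 1) ∈ X ∧ ∀ z ∈ X,
      γ * (inner ℝ (g t (x t)) (x (t + 1)) : ℝ) +
          (h (x (t + 1)) - h (x t) - (inner ℝ (gh (x t)) (x (t + 1) - x t) : ℝ)) ≤
        γ * (inner ℝ (g t (x t)) z : ℝ) +
          (h z - h (x t) - (inner ℝ (gh (x t)) (z - x t) : ℝ))) :
    ∑ t ∈ Finset.range T, ℓ t (x t) -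
        sInf ((fun z => ∑ t ∈ Finset.range T, ℓ t z) '' X) ≤
      2 * L * Real.sqrt ((sSup (h '' X) - sInf (h '' X)) * T / (2 * K)) := by
  classical
  have hnn := aux_N_nonneg N hN_add hN_smul hN_eq_zero
  have hCS := aux_CS N hN_add hN_smul hN_eq_zero Nd hNd
  have hxX : ∀ t, x t ∈ X := by
    intro t
    cases t with
    | zero => exact hx1.1
    | succ n => exact (hrec n).1
  set S1 := sSup (h '' X) with hS1
  set S0 := sInf (h '' X) with hS0
  set Dh := S1 - S0 with hDhdef
  have hcont : ContinuousOn h X := fun z hz => (hgh z hz).continuousWithinAt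
  have himg : IsCompact (h '' X) := hXcomp.image_of_continuousOn hcont
  have himgne : (h '' X).Nonempty := hXne.image h
  have hbddA : BddAbove (h '' X) := himg.bddAbove
  have hbddB : BddBelow (h '' X) := himg.bddBelow
  have hDh0 : 0 ≤ Dh := by
    have := csInf_le_csSup himgne hbddB hbddA
    rw [hDhdef]; rw [hS1, hS0]; linarith
  have hRHS0 : 0 ≤ 2 * L * Real.sqrt (Dh * T / (2*K)) :=
    mul_nonneg (by linarith) (Real.sqrt_nonneg _)
  rcases Nat.eq_zero_or_pos T with hT0 | hTpos
  · subst hT0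
    simp only [Finset.range_zero, Finset.sum_empty]
    have himage : (fun _ : EuclideanSpace ℝ (Fin d) => (0:ℝ)) '' X = {0} :=
      hXne.image_const 0
    rw [himage, csInf_singleton, sub_zero]
    simpa using hRHS0
  rcases hDh0.lt_or_eq with hDh | hDh
  swap
  · -- degenerate case: h is constant on X, so X is a singleton
    have hconst : ∀ z ∈ X, ∀ w ∈ X, h z ≤ h w := by
      intro z hz w hw
      have h1 : h z ≤ S1 := le_csSup hbddA ⟨z, hz, rfl⟩
      have h2 : S0 ≤ h w := csInf_le hbddB ⟨w, hw, rfl⟩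
      have h3 : S1 - S0 = 0 := by rw [← hDhdef]; exact hDh.symm
      linarith
    have hsing : ∀ w ∈ X, ∀ z ∈ X, w = z := by
      intro w hw z hz
      have hFO : 0 ≤ (inner ℝ (gh z) (w - z) : ℝ) :=
        aux_min_grad hXcv hz (hgh z hz) (fun v hv => hconst z hz v hv) hw
      have hstr := hstrong z hz w hw
      have hle : h w ≤ h z := hconst w hw z hz
      have hsq : N (w - z) ^ 2 ≤ 0 := by nlinarith
      have hNle : N (w - z) ≤ 0 := by nlinarith [hnn (w - z)]
      have hN0 : N (w - z) = 0 := le_antisymm hNle (hnn _)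
      have := (hN_eq_zero _).mp hN0
      exact sub_eq_zero.mp this
    have hsum : ∑ t ∈ Finset.range T, ℓ t (x t) = ∑ t ∈ Finset.range T, ℓ t (x 0) :=
      Finset.sum_congr rfl fun t _ => by rw [hsing _ (hxX t) _ (hxX 0)]
    have himage : (fun z => ∑ t ∈ Finset.range T, ℓ t z) '' X
        = {∑ t ∈ Finset.range T, ℓ t (x 0)} := by
      rw [Set.image_congr (g := fun _ => ∑ t ∈ Finset.range T, ℓ t (x 0))
        (fun z hz => by rw [hsing _ hz _ (hxX 0)])]
      exact hXne.image_const _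
    rw [hsum, himage, csInf_singleton, sub_self]
    exact hRHS0
  -- main case: Dh > 0, T > 0
  set s := Real.sqrt (2 * K * Dh / T) with hsdef
  set r := Real.sqrt (Dh * T / (2 * K)) with hrdef
  have hTpos' : (0:ℝ) < T := by exact_mod_cast hTpos
  have hL0 : L ≠ 0 := hL.ne'
  have harg1 : (0:ℝ) < 2 * K * Dh / T := by
    apply div_pos (by nlinarith) hTpos'
  have harg2 : (0:ℝ) < Dh * T / (2 * K) := by
    apply div_pos (by nlinarith) (by linarith)
  have hs2 : s ^ 2 = 2 * K * Dh / T := by rw [hsdef]; exact Real.sq_sqrt harg1.le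
  have hspos : 0 < s := by rw [hsdef]; exact Real.sqrt_pos.mpr harg1
  have hrpos : 0 < r := by rw [hrdef]; exact Real.sqrt_pos.mpr harg2
  have hγpos : 0 < γ := by rw [hγ]; exact mul_pos (inv_pos.mpr hL) hspos
  have hγL : γ * L = s := by rw [hγ]; field_simp
  have hTs : (T:ℝ) * s ^ 2 = 2 * K * Dh := by
    rw [hs2]; field_simp
  have hrs : r * s = Dh := by
    rw [hrdef, hsdef, ← Real.sqrt_mul harg2.le]
    rw [show Dh * (T:ℝ) / (2*K) * (2*K*Dh/(T:ℝ)) = Dh^2 by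
      field_simp]
    exact Real.sqrt_sq hDh.le
  have key : ∀ z ∈ X, ∑ t ∈ Finset.range T, ℓ t (x t) - ∑ t ∈ Finset.range T, ℓ t z
        ≤ 2 * L * r := by
    intro z hz
    set u : ℕ → ℝ := fun t => h z - h (x t) - (inner ℝ (gh (x t)) (z - x t) : ℝ) with hudef
    have step : ∀ t, γ * (ℓ t (x t) - ℓ t z)
        ≤ γ ^ 2 * L ^ 2 / (2 * K) + (u t - u (t + 1)) := by
      intro t
      have haX := hxX t
      have hbX := hxX (t + 1)
      -- convexity of the loss
      have hcv : ℓ t (x t) - ℓ t z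
          ≤ (inner ℝ (g t (x t)) (x t) : ℝ) - (inner ℝ (g t (x t)) z : ℝ) := by
        have := aux_convex_grad hXcv haX hz (hconv t) (hgrad t (x t) haX)
        rw [inner_sub_right] at this; linarith
      -- first-order optimality of the mirror step
      have hφeq : (fun w => γ * (inner ℝ (g t (x t)) w : ℝ) +
            (h w - h (x t) - (inner ℝ (gh (x t)) (w - x t) : ℝ)))
          = fun w => (inner ℝ (γ • g t (x t) - gh (x t)) w : ℝ) + h w +
            ((inner ℝ (gh (x t)) (x t) : ℝ) - h (x t)) := by
        funext w
        rw [inner_sub_left, real_inner_smul_left, inner_sub_right]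
        ring
      have hgradφ : HasGradientWithinAt
          (fun w => γ * (inner ℝ (g t (x t)) w : ℝ) +
            (h w - h (x t) - (inner ℝ (gh (x t)) (w - x t) : ℝ)))
          ((γ • g t (x t) - gh (x t)) + gh (x (t + 1))) X (x (t + 1)) := by
        rw [hφeq]
        exact aux_grad_lin_add (hgh _ hbX) _ _
      have hFO : 0 ≤ (inner ℝ ((γ • g t (x t) - gh (x t)) + gh (x (t + 1)))
          (z - x (t + 1)) : ℝ) :=
        aux_min_grad hXcv hbX hgradφ (hrec t).2 hz
      rw [inner_add_left, inner_sub_left, real_inner_smul_left,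
        inner_sub_right, inner_sub_right, inner_sub_right] at hFO
      -- Cauchy–Schwarz bound on the dual-norm step
      have hn0 : 0 ≤ N (x (t + 1) - x t) := hnn _
      have hCSt : (inner ℝ (g t (x t)) (x t) : ℝ) - (inner ℝ (g t (x t)) (x (t + 1)) : ℝ)
          ≤ L * N (x (t + 1) - x t) := by
        have h1 := hCS (g t (x t)) (x t - x (t + 1))
        have h2 : N (x t - x (t + 1)) = N (x (t + 1) - x t) := by
          rw [← neg_sub (x (t + 1)) (x t), ← neg_one_smul ℝ, hN_smul]
          simp
        rw [inner_sub_right, h2] at h1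
        have h3 : Nd (g t (x t)) * N (x (t + 1) - x t)
            ≤ L * N (x (t + 1) - x t) :=
          mul_le_mul_of_nonneg_right (hgb t _ haX) hn0
        linarith
      -- strong convexity
      have hstr := hstrong (x t) haX (x (t + 1)) hbX
      rw [inner_sub_right] at hstr
      -- quadratic bound
      have hquad : γ * (L * N (x (t + 1) - x t)) - K / 2 * N (x (t + 1) - x t) ^ 2
          ≤ γ ^ 2 * L ^ 2 / (2 * K) := by
        rw [le_div_iff₀ (by linarith : (0:ℝ) < 2 * K)]
        nlinarith [sq_nonneg (K * N (x (t + 1) - x t) - γ * L)]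
      have hut : u t - u (t + 1) = (h (x (t + 1)) - h (x t))
          - ((inner ℝ (gh (x t)) z : ℝ) - (inner ℝ (gh (x t)) (x t) : ℝ))
          + ((inner ℝ (gh (x (t + 1))) z : ℝ) - (inner ℝ (gh (x (t + 1))) (x (t + 1)) : ℝ)) := by
        simp only [hudef, inner_sub_right]
        ring
      have e1 := mul_le_mul_of_nonneg_left hcv hγpos.le
      have e4 := mul_le_mul_of_nonneg_left hCSt hγpos.le
      rw [hut]
      linarith [e1, e4, hFO, hstr, hquad]
    have hsum2 : γ * (∑ t ∈ Finset.range T, ℓ t (x t) - ∑ t ∈ Finset.range T, ℓ t z)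
        ≤ T * (γ ^ 2 * L ^ 2 / (2 * K)) + (u 0 - u T) := by
      rw [← Finset.sum_sub_distrib, Finset.mul_sum]
      calc ∑ t ∈ Finset.range T, γ * (ℓ t (x t) - ℓ t z)
          ≤ ∑ t ∈ Finset.range T, (γ ^ 2 * L ^ 2 / (2 * K) + (u t - u (t + 1))) :=
            Finset.sum_le_sum fun t _ => step t
        _ = T * (γ ^ 2 * L ^ 2 / (2 * K)) + (u 0 - u T) := by
            rw [Finset.sum_add_distrib, Finset.sum_const, Finset.card_range,
              Finset.sum_range_sub' u, nsmul_eq_mul]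
    have hu0 : u 0 ≤ Dh := by
      have hFO0 : 0 ≤ (inner ℝ (gh (x 0)) (z - x 0) : ℝ) :=
        aux_min_grad hXcv hx1.1 (hgh _ hx1.1) hx1.2 hz
      have h1 : h z ≤ S1 := le_csSup hbddA ⟨z, hz, rfl⟩
      have h2 : S0 ≤ h (x 0) := csInf_le hbddB ⟨x 0, hx1.1, rfl⟩
      simp only [hudef]
      rw [hDhdef]
      linarith
    have huT : 0 ≤ u T := by
      have hstrT := hstrong (x T) (hxX T) z hz
      have hq : 0 ≤ K / 2 * N (z - x T) ^ 2 :=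
        mul_nonneg (by linarith) (sq_nonneg _)
      simp only [hudef]
      linarith
    have hA : (T:ℝ) * (γ ^ 2 * L ^ 2 / (2 * K)) = Dh := by
      have h1 : γ ^ 2 * L ^ 2 = s ^ 2 := by
        have h2 : (γ * L) ^ 2 = s ^ 2 := by rw [hγL]
        nlinarith [h2]
      rw [h1]
      field_simp
      linarith [hTs]
    have hB : γ * (2 * L * r) = 2 * Dh := by
      have h1 : γ * (2 * L * r) = 2 * r * (γ * L) := by ring
      rw [h1, hγL]
      rw [mul_assoc, hrs]
    have hfinal : γ * (∑ t ∈ Finset.range T, ℓ t (x t) - ∑ t ∈ Finset.range T, ℓ t z)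
        ≤ γ * (2 * L * r) := by
      have h5 : ↑T * (γ ^ 2 * L ^ 2 / (2 * K)) + (u 0 - u T) ≤ 2 * Dh := by
        rw [hA]; linarith
      rw [hB]; exact le_trans hsum2 h5
    exact le_of_mul_le_mul_left hfinal hγpos
  have hlb : (∑ t ∈ Finset.range T, ℓ t (x t)) - 2 * L * r
      ≤ sInf ((fun z => ∑ t ∈ Finset.range T, ℓ t z) '' X) := by
    apply le_csInf (hXne.image _)
    rintro b ⟨z, hz, rfl⟩
    have := key z hz
    simp only
    linarith
  linarith
end

section
/- The negative Gibbs–Shannon entropy h(x) = Σ_{j=1}^d x_j log x_j is 1-strongly convex on the probability simplex Δ(d) = {x ∈ ℝ^d : x_j ≥ 0, Σ_j x_j = 1} with respect to the ℓ¹-norm: for all x, y in the (relative) interior of Δ(d), h(y) ≥ h(x) + ⟨∇h(x), y − x⟩ + (1/2) ‖y − x‖₁², where ‖z‖₁ = Σ_j |z_j|. -/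
open Real Finset

noncomputable def entGaux1 (t : ℝ) : ℝ := (t + 1) * Real.log t - 2 * (t - 1)

noncomputable def entGaux (t : ℝ) : ℝ :=
  (2 * t + 4) * (t * Real.log t - t + 1) - 3 * (t - 1) ^ 2

lemma entG_log_lb {t : ℝ} (ht : 0 < t) : 0 ≤ Real.log t + 1 / t - 1 := by
  have h := Real.log_le_sub_one_of_pos (show 0 < t⁻¹ by positivity)
  rw [Real.log_inv] at h
  have : t⁻¹ = 1 / t := by ring
  linarith [this ▸ h]

lemma hasDerivAt_entGaux1 {t : ℝ} (ht : 0 < t) :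
    HasDerivAt entGaux1 (Real.log t + 1 / t - 1) t := by
  have h1 : HasDerivAt (fun s : ℝ => (s + 1) * Real.log s)
      (1 * Real.log t + (t + 1) * t⁻¹) t :=
    ((hasDerivAt_id t).add_const 1).mul (Real.hasDerivAt_log ht.ne')
  have h2 : HasDerivAt (fun s : ℝ => 2 * (s - 1)) 2 t := by
    simpa using ((hasDerivAt_id t).sub_const 1).const_mul 2
  have := h1.sub h2
  refine this.congr_deriv ?_
  field_simp
  ring

lemma hasDerivAt_entGaux {t : ℝ} (ht : 0 < t) :
    HasDerivAt entGaux (4 * entGaux1 t) t := by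
  have h1 : HasDerivAt (fun s : ℝ => s * Real.log s) (Real.log t + 1) t :=
    Real.hasDerivAt_mul_log ht.ne'
  have h2 : HasDerivAt (fun s : ℝ => s * Real.log s - s + 1) (Real.log t) t := by
    simpa using (h1.sub (hasDerivAt_id t)).add_const 1
  have h3 : HasDerivAt (fun s : ℝ => 2 * s + 4) 2 t := by
    simpa using ((hasDerivAt_id t).const_mul 2).add_const 4
  have h4 : HasDerivAt (fun s : ℝ => 3 * (s - 1) ^ 2) (3 * (2 * (t - 1))) t := by
    have : HasDerivAt (fun s : ℝ => (s - 1) ^ 2) (2 * (t - 1) ^ 1 * 1) t :=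
      (((hasDerivAt_id t).sub_const 1).pow 2)
    simpa using this.const_mul 3
  have := (h3.mul h2).sub h4
  refine this.congr_deriv ?_
  unfold entGaux1
  ring

lemma entGaux1_mono : MonotoneOn entGaux1 (Set.Ioi (0 : ℝ)) := by
  apply monotoneOn_of_deriv_nonneg (convex_Ioi 0)
  · exact fun t ht => (hasDerivAt_entGaux1 ht).continuousAt.continuousWithinAt
  · intro t ht
    rw [interior_Ioi] at ht
    exact (hasDerivAt_entGaux1 ht).differentiableAt.differentiableWithinAt
  · intro t ht
    rw [interior_Ioi] at ht
    rw [(hasDerivAt_entGaux1 ht).deriv]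
    exact entG_log_lb ht

lemma entGaux1_one : entGaux1 1 = 0 := by simp [entGaux1]

lemma entGaux_one : entGaux 1 = 0 := by simp [entGaux]

lemma entGaux_nonneg {t : ℝ} (ht : 0 < t) : 0 ≤ entGaux t := by
  rcases le_total t 1 with h1 | h1
  · -- antitone on Ioc 0 1
    have hanti : AntitoneOn entGaux (Set.Ioc (0 : ℝ) 1) := by
      apply antitoneOn_of_deriv_nonpos (convex_Ioc 0 1)
      · exact fun s hs => (hasDerivAt_entGaux hs.1).continuousAt.continuousWithinAt
      · intro s hs
        rw [interior_Ioc] at hs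
        exact (hasDerivAt_entGaux hs.1).differentiableAt.differentiableWithinAt
      · intro s hs
        rw [interior_Ioc] at hs
        rw [(hasDerivAt_entGaux hs.1).deriv]
        have := entGaux1_mono (Set.mem_Ioi.2 hs.1) (Set.mem_Ioi.2 one_pos) hs.2.le
        rw [entGaux1_one] at this
        linarith
    have := hanti (Set.mem_Ioc.2 ⟨ht, h1⟩) (Set.mem_Ioc.2 ⟨one_pos, le_refl 1⟩) h1
    rw [entGaux_one] at this
    linarith
  · -- monotone on Ici 1
    have hmono : MonotoneOn entGaux (Set.Ici (1 : ℝ)) := by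
      apply monotoneOn_of_deriv_nonneg (convex_Ici 1)
      · exact fun s hs => (hasDerivAt_entGaux (lt_of_lt_of_le one_pos hs)).continuousAt.continuousWithinAt
      · intro s hs
        rw [interior_Ici] at hs
        exact (hasDerivAt_entGaux (lt_trans one_pos hs)).differentiableAt.differentiableWithinAt
      · intro s hs
        rw [interior_Ici] at hs
        rw [(hasDerivAt_entGaux (lt_trans one_pos hs)).deriv]
        have := entGaux1_mono (Set.mem_Ioi.2 one_pos) (Set.mem_Ioi.2 (lt_trans one_pos hs)) hs.le
        rw [entGaux1_one] at this
        linarith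
    have := hmono (Set.mem_Ici.2 (le_refl 1)) (Set.mem_Ici.2 h1) h1
    rw [entGaux_one] at this
    linarith

/-- Pointwise bound: `3(a-b)² ≤ (2a+4b)(a(log a - log b) - a + b)`. -/
lemma ent_pointwise {a b : ℝ} (ha : 0 < a) (hb : 0 < b) :
    3 * (a - b) ^ 2 ≤ (2 * a + 4 * b) * (a * (Real.log a - Real.log b) - a + b) := by
  have ht : 0 < a / b := by positivity
  have key := entGaux_nonneg ht
  unfold entGaux at key
  rw [Real.log_div ha.ne' hb.ne'] at key
  have key2 : 3 * (a / b - 1) ^ 2 ≤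
      (2 * (a / b) + 4) * ((a / b) * (Real.log a - Real.log b) - a / b + 1) := by linarith
  have hb2 : (0 : ℝ) < b ^ 2 := by positivity
  have h3 := mul_le_mul_of_nonneg_right key2 hb2.le
  calc 3 * (a - b) ^ 2 = 3 * (a / b - 1) ^ 2 * b ^ 2 := by
        field_simp
    _ ≤ (2 * (a / b) + 4) * ((a / b) * (Real.log a - Real.log b) - a / b + 1) * b ^ 2 := h3
    _ = (2 * a + 4 * b) * (a * (Real.log a - Real.log b) - a + b) := by
        field_simp

/-- **The negative Gibbs–Shannon entropy is 1-strongly convex on the simplex w.r.t. the ℓ¹-norm.**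
For all points `x, y` in the relative interior of the probability simplex `Δ(d)`
(i.e. with strictly positive coordinates summing to one),
`h(y) ≥ h(x) + ⟨∇h(x), y − x⟩ + (1/2)‖y − x‖₁²`, where `h(z) = ∑_j z_j log z_j` and
`∇h(x) = (1 + log x_j)_j`. -/
theorem entropy_one_strongly_convex_l1
    (d : ℕ) (x y : Fin d → ℝ)
    (hxpos : ∀ j, 0 < x j) (hxsum : ∑ j, x j = 1)
    (hypos : ∀ j, 0 < y j) (hysum : ∑ j, y j = 1) :
    ∑ j, y j * Real.log (y j) ≥
      (∑ j, x j * Real.log (x j)) +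
        (∑ j, (1 + Real.log (x j)) * (y j - x j)) +
        (1 / 2) * (∑ j, |y j - x j|) ^ 2 := by
  set w : Fin d → ℝ := fun j => (2 * y j + 4 * x j) / 3 with hw
  have hwpos : ∀ j ∈ Finset.univ, 0 < w j := fun j _ => by
    have := hxpos j; have := hypos j; simp only [hw]; positivity
  have hwsum : ∑ j, w j = 2 := by
    simp only [hw]
    rw [← Finset.sum_div]
    rw [Finset.sum_add_distrib, ← Finset.mul_sum, ← Finset.mul_sum, hxsum, hysum]
    norm_num
  -- KL divergence
  set KL : ℝ := ∑ j, (y j * (Real.log (y j) - Real.log (x j)) - y j + x j) with hKL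
  -- Pinsker: (∑|y-x|)² ≤ 2 * KL
  have sedrak := Finset.sq_sum_div_le_sum_sq_div Finset.univ
      (fun j => |y j - x j|) hwpos
  rw [hwsum] at sedrak
  have step2 : ∑ j, |y j - x j| ^ 2 / w j ≤ KL := by
    rw [hKL]
    apply Finset.sum_le_sum
    intro j _
    rw [sq_abs]
    rw [div_le_iff₀ (hwpos j (Finset.mem_univ j))]
    have hpt := ent_pointwise (hypos j) (hxpos j)
    have hw3 : (y j * (Real.log (y j) - Real.log (x j)) - y j + x j) * w j
        = (2 * y j + 4 * x j) * (y j * (Real.log (y j) - Real.log (x j)) - y j + x j) / 3 := by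
      simp only [hw]; ring
    rw [hw3]
    linarith
  have pinsker : (∑ j, |y j - x j|) ^ 2 ≤ 2 * KL := by
    have := le_trans sedrak step2
    linarith [this]
  -- rewrite the gradient term
  have hgrad : ∑ j, (1 + Real.log (x j)) * (y j - x j)
      = ∑ j, Real.log (x j) * (y j - x j) := by
    have : ∑ j, (1 + Real.log (x j)) * (y j - x j)
        = (∑ j, (y j - x j)) + ∑ j, Real.log (x j) * (y j - x j) := by
      rw [← Finset.sum_add_distrib]; apply Finset.sum_congr rfl; intro j _; ring
    rw [this, Finset.sum_sub_distrib, hxsum, hysum]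
    ring
  have hKLexp : KL = (∑ j, y j * Real.log (y j)) - (∑ j, x j * Real.log (x j))
      - ∑ j, Real.log (x j) * (y j - x j) := by
    rw [hKL]
    have h1 : ∑ j, (y j * (Real.log (y j) - Real.log (x j)) - y j + x j)
        = (∑ j, y j * Real.log (y j)) - (∑ j, y j * Real.log (x j))
          - (∑ j, y j) + ∑ j, x j := by
      simp only [mul_sub]
      rw [Finset.sum_add_distrib, Finset.sum_sub_distrib, Finset.sum_sub_distrib]
    rw [h1, hxsum, hysum]
    have h2 : ∑ j, Real.log (x j) * (y j - x j)
        = (∑ j, y j * Real.log (x j)) - ∑ j, x j * Real.log (x j) := by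
      rw [← Finset.sum_sub_distrib]; apply Finset.sum_congr rfl; intro j _; ring
    rw [h2]; ring
  rw [hgrad]
  have : (1 / 2 : ℝ) * (∑ j, |y j - x j|) ^ 2 ≤ KL := by linarith
  linarith [hKLexp ▸ this]
end
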